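/- arXiv:1010.3821 — 4 statements merged into one kernel-verified Lean document; each statement's English description precedes it below -/
import Mathlib

section
/- Let r > 1 and let i, p be sequences with i(n) = o(p(n)) and p(n) → ∞. Then the sequence [(1+r)^(r-1)/r^r]^(p(n)/2) · r^(i(n)/2) tends to 0 as n → ∞. -/
open Filter Real

/-- If `r > 1`, `p n → ∞` and `i n / p n → 0` with `i, p` nonnegative, then
`[(1+r)^(r-1)/r^r]^(p n / 2) * r^(i n / 2) → 0`. -/
theorem bound_tendsto_zero (r : ℝ) (hr : 1 < r) (i p : ℕ → ℝ)
    (hi : ∀ n, 0 ≤ i n) (hp : ∀ n, 0 ≤ p n)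
    (hptop : Tendsto p atTop atTop)
    (hip : Tendsto (fun n => i n / p n) atTop (nhds 0)) :
    Tendsto (fun n => ((1 + r) ^ (r - 1) / r ^ r) ^ (p n / 2) * r ^ (i n / 2))
      atTop (nhds 0) := by
  have hr0 : (0:ℝ) < r := by linarith
  have hr1 : (0:ℝ) < 1 + r := by linarith
  set c := (1 + r) ^ (r - 1) / r ^ r with hc
  have hcpos : 0 < c := div_pos (Real.rpow_pos_of_pos hr1 _) (Real.rpow_pos_of_pos hr0 _)
  have hlogc : Real.log c < 0 := by
    have h1 : Real.log c = (r - 1) * Real.log (1 + r) - r * Real.log r := by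
      rw [hc, Real.log_div (ne_of_gt (Real.rpow_pos_of_pos hr1 _))
        (ne_of_gt (Real.rpow_pos_of_pos hr0 _)), Real.log_rpow hr1, Real.log_rpow hr0]
    have h2 : Real.log (1 + r) = Real.log r + Real.log (1 + 1 / r) := by
      have he : 1 + r = r * (1 + 1 / r) := by field_simp; ring
      rw [he, Real.log_mul (ne_of_gt hr0) (by positivity)]
    have h3 : Real.log (1 + 1 / r) < 1 / r := by
      have := Real.log_lt_sub_one_of_pos (x := 1 + 1 / r) (by positivity)
        (by intro h; have h0 : (1:ℝ)/r = 0 := by linarith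
            rw [div_eq_zero_iff] at h0; simp at h0; linarith)
      linarith
    have h4 : 1 - 1 / r < Real.log r := by
      have := Real.log_lt_sub_one_of_pos (x := 1 / r) (by positivity)
        (by intro h
            have : r = 1 := by field_simp at h; linarith
            linarith)
      rw [one_div, Real.log_inv] at this
      have h6 : r * r⁻¹ = 1 := mul_inv_cancel₀ (ne_of_gt hr0)
      rw [one_div]
      nlinarith [this, h6]
    have hrm1 : 0 < r - 1 := by linarith
    have h6 : r * (1/r) = 1 := by field_simp
    nlinarith [mul_lt_mul_of_pos_left h3 hrm1, h6, h4, h1, h2]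
  have key : Tendsto (fun n => p n / 2 * (Real.log c + i n / p n * Real.log r))
      atTop atBot := by
    have hlim : Tendsto (fun n => Real.log c + i n / p n * Real.log r) atTop
        (nhds (Real.log c)) := by
      have h := hip.mul_const (Real.log r)
      simpa using tendsto_const_nhds.add h
    have hp2 : Tendsto (fun n => p n / 2) atTop atTop :=
      hptop.atTop_div_const (by norm_num)
    exact hp2.atTop_mul_neg hlogc hlim
  have hfinal := Real.tendsto_exp_atBot.comp key
  refine hfinal.congr' ?_
  filter_upwards [hptop.eventually_gt_atTop 0] with n hn
  simp only [Function.comp]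
  rw [Real.rpow_def_of_pos hcpos, Real.rpow_def_of_pos hr0, ← Real.exp_add]
  congr 1
  field_simp
end

section
/- For all real s > r > 1, the quantity (1+r)^(r-1) · ((rs-1)/(s-1))^(-r(s-1)/s) is strictly less than 1. -/
open Real Set

private noncomputable def Gfun (r : ℝ) : ℝ → ℝ :=
  fun s => r * (s - 1) / s * (Real.log (r * s - 1) - Real.log (s - 1))

private lemma hasDerivG (r : ℝ) (hr : 1 < r) {s : ℝ} (hs : 1 < s) :
    HasDerivAt (Gfun r)
      (r / s ^ 2 * (Real.log (r * s - 1) - Real.log (s - 1))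
        + r * (s - 1) / s * (r / (r * s - 1) - 1 / (s - 1))) s := by
  have hs0 : s ≠ 0 := by nlinarith
  have hs1 : s - 1 ≠ 0 := by nlinarith
  have hrs : r * s - 1 ≠ 0 := by nlinarith
  have h1 : HasDerivAt (fun s : ℝ => r * (s - 1) / s) (r / s ^ 2) s := by
    have : HasDerivAt (fun s : ℝ => r * (s - 1) / s)
        ((r * 1 * s - r * (s - 1) * 1) / s ^ 2) s :=
      (((hasDerivAt_id s).sub_const 1).const_mul r).div (hasDerivAt_id s) hs0
    convert this using 1
    field_simp
    ring
  have h2a : HasDerivAt (fun s : ℝ => Real.log (r * s - 1)) (r / (r * s - 1)) s := by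
    have hl : HasDerivAt (fun s : ℝ => r * s - 1) r s := by
      simpa using ((hasDerivAt_id s).const_mul r).sub_const 1
    simpa [div_eq_mul_inv, mul_comm, Function.comp_def] using (Real.hasDerivAt_log hrs).comp s hl
  have h2b : HasDerivAt (fun s : ℝ => Real.log (s - 1)) (1 / (s - 1)) s := by
    have hl : HasDerivAt (fun s : ℝ => s - 1) 1 s := (hasDerivAt_id s).sub_const 1
    simpa [div_eq_mul_inv, Function.comp_def] using (Real.hasDerivAt_log hs1).comp s hl
  exact h1.mul (h2a.sub h2b)

private lemma derivG_pos (r : ℝ) (hr : 1 < r) {s : ℝ} (hs : 1 < s) :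
    0 < r / s ^ 2 * (Real.log (r * s - 1) - Real.log (s - 1))
        + r * (s - 1) / s * (r / (r * s - 1) - 1 / (s - 1)) := by
  have hs0 : (0:ℝ) < s := by linarith
  have hs1 : (0:ℝ) < s - 1 := by linarith
  have hrs : (0:ℝ) < r * s - 1 := by nlinarith
  have hlt : s - 1 < r * s - 1 := by nlinarith
  -- log ((s-1)/(rs-1)) < (s-1)/(rs-1) - 1
  have hx : (0:ℝ) < (s - 1) / (r * s - 1) := by positivity
  have hx1 : (s - 1) / (r * s - 1) ≠ 1 := by
    intro h
    have := (div_eq_one_iff_eq (ne_of_gt hrs)).mp h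
    linarith
  have hlog := Real.log_lt_sub_one_of_pos hx hx1
  rw [Real.log_div (ne_of_gt hs1) (ne_of_gt hrs)] at hlog
  -- so log(rs-1) - log(s-1) > 1 - (s-1)/(rs-1)
  have hL : 1 - (s - 1) / (r * s - 1) < Real.log (r * s - 1) - Real.log (s - 1) := by
    linarith
  set L := Real.log (r * s - 1) - Real.log (s - 1) with hLdef
  have key : r / s ^ 2 * L + r * (s - 1) / s * (r / (r * s - 1) - 1 / (s - 1))
      = r / s ^ 2 * (L - (1 - (s - 1) / (r * s - 1))) := by
    field_simp
    ring
  rw [key]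
  have h1 : (0:ℝ) < r / s ^ 2 := by positivity
  have h2 : (0:ℝ) < L - (1 - (s - 1) / (r * s - 1)) := by linarith
  exact mul_pos h1 h2

private lemma G_strictMonoOn (r : ℝ) (hr : 1 < r) : StrictMonoOn (Gfun r) (Ici r) := by
  apply strictMonoOn_of_deriv_pos (convex_Ici r)
  · intro x hx
    have hx1 : 1 < x := lt_of_lt_of_le hr hx
    exact (hasDerivG r hr hx1).continuousAt.continuousWithinAt
  · intro x hx
    rw [interior_Ici] at hx
    have hx1 : 1 < x := lt_trans hr hx
    rw [(hasDerivG r hr hx1).deriv]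
    exact derivG_pos r hr hx1

/-- For all `s > r > 1`, `(1+r)^(r-1) * ((rs-1)/(s-1))^(-r(s-1)/s) < 1`. -/
theorem two_rate_bound_lt_one (r s : ℝ) (hr : 1 < r) (hs : r < s) :
    (1 + r) ^ (r - 1) * ((r * s - 1) / (s - 1)) ^ (-(r * (s - 1) / s)) < 1 := by
  have hr0 : (0:ℝ) < r := by linarith
  have hs1 : (0:ℝ) < s - 1 := by linarith
  have hrs : (0:ℝ) < r * s - 1 := by nlinarith
  have hb : (0:ℝ) < (r * s - 1) / (s - 1) := by positivity
  have ha : (0:ℝ) < 1 + r := by linarith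
  -- G r r < G r s
  have hmono := G_strictMonoOn r hr (self_mem_Ici) (le_of_lt hs : r ≤ s) hs
  have hGr : Gfun r r = (r - 1) * Real.log (1 + r) := by
    unfold Gfun
    have h1 : r * r - 1 = (r - 1) * (1 + r) := by ring
    rw [h1, Real.log_mul (by linarith) (by linarith)]
    field_simp
    ring
  have hGs : Gfun r s = r * (s - 1) / s * Real.log ((r * s - 1) / (s - 1)) := by
    unfold Gfun
    rw [Real.log_div (ne_of_gt hrs) (ne_of_gt hs1)]
  rw [hGr, hGs] at hmono
  -- exponentiate
  have hpow : (1 + r) ^ (r - 1) < ((r * s - 1) / (s - 1)) ^ (r * (s - 1) / s) := by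
    rw [Real.rpow_def_of_pos ha, Real.rpow_def_of_pos hb]
    apply Real.exp_lt_exp.mpr
    calc Real.log (1 + r) * (r - 1) = (r - 1) * Real.log (1 + r) := by ring
      _ < r * (s - 1) / s * Real.log ((r * s - 1) / (s - 1)) := hmono
      _ = Real.log ((r * s - 1) / (s - 1)) * (r * (s - 1) / s) := by ring
  rw [Real.rpow_neg (le_of_lt hb), ← div_eq_mul_inv, div_lt_one (by positivity)]
  exact hpow
end

section
/- The function δ(r) = (r-1)/((r+1)^((r-1)/r) - 1) - 1 is strictly decreasing on (1, ∞). -/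
open Real

noncomputable def deltaF (r : ℝ) : ℝ := (r + 1) ^ ((r - 1) / r)

noncomputable def deltaH (r : ℝ) : ℝ := Real.log (r + 1) * ((r - 1) / r)

noncomputable def deltaH1 (r : ℝ) : ℝ :=
  Real.log (r + 1) / r ^ 2 + (r - 1) / (r * (r + 1))

noncomputable def deltaH2 (r : ℝ) : ℝ :=
  (1 / (r + 1) * r ^ 2 - Real.log (r + 1) * (2 * r)) / (r ^ 2) ^ 2 +
    (1 * (r * (r + 1)) - (r - 1) * (1 * (r + 1) + r * 1)) / (r * (r + 1)) ^ 2

lemma hasDerivAt_deltaH {r : ℝ} (hr : 1 < r) : HasDerivAt deltaH (deltaH1 r) r := by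
  have h0 : r ≠ 0 := by linarith
  have h1 : (0:ℝ) < r + 1 := by linarith
  have l1 : HasDerivAt (fun x : ℝ => Real.log (x + 1)) (1 / (r + 1)) r :=
    ((hasDerivAt_id r).add_const 1).log h1.ne'
  have l2 : HasDerivAt (fun x : ℝ => (x - 1) / x)
      ((1 * r - (r - 1) * 1) / r ^ 2) r :=
    ((hasDerivAt_id r).sub_const 1).div (hasDerivAt_id r) h0
  have h := l1.mul l2
  refine h.congr_deriv ?_
  unfold deltaH1
  field_simp
  ring

lemma hasDerivAt_deltaH1 {r : ℝ} (hr : 1 < r) : HasDerivAt deltaH1 (deltaH2 r) r := by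
  have h0 : r ≠ 0 := by linarith
  have h1 : (0:ℝ) < r + 1 := by linarith
  have l1 : HasDerivAt (fun x : ℝ => Real.log (x + 1)) (1 / (r + 1)) r :=
    ((hasDerivAt_id r).add_const 1).log h1.ne'
  have lpow : HasDerivAt (fun x : ℝ => x ^ 2) (2 * r) r := by
    simpa using hasDerivAt_pow 2 r
  have t1 : HasDerivAt (fun x : ℝ => Real.log (x + 1) / x ^ 2)
      ((1 / (r + 1) * r ^ 2 - Real.log (r + 1) * (2 * r)) / (r ^ 2) ^ 2) r :=
    l1.div lpow (pow_ne_zero 2 h0)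
  have lden : HasDerivAt (fun x : ℝ => x * (x + 1)) (1 * (r + 1) + r * 1) r :=
    (hasDerivAt_id r).mul ((hasDerivAt_id r).add_const 1)
  have t2 : HasDerivAt (fun x : ℝ => (x - 1) / (x * (x + 1)))
      ((1 * (r * (r + 1)) - (r - 1) * (1 * (r + 1) + r * 1)) / (r * (r + 1)) ^ 2) r :=
    ((hasDerivAt_id r).sub_const 1).div lden (by positivity)
  exact t1.add t2

lemma hasDerivAt_deltaF {r : ℝ} (hr : 1 < r) :
    HasDerivAt deltaF (Real.exp (deltaH r) * deltaH1 r) r := by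
  have h : HasDerivAt (fun x => Real.exp (deltaH x))
      (Real.exp (deltaH r) * deltaH1 r) r := (hasDerivAt_deltaH hr).exp
  apply h.congr_of_eventuallyEq
  filter_upwards [eventually_gt_nhds (show (-1:ℝ) < r by linarith)] with x hx
  rw [deltaF, deltaH, Real.rpow_def_of_pos (by linarith)]

lemma deltaH1sq_add_deltaH2_pos {r : ℝ} (hr : 1 < r) :
    0 < deltaH1 r ^ 2 + deltaH2 r := by
  have h0 : (0:ℝ) < r := by linarith
  have h1 : (0:ℝ) < r + 1 := by linarith
  have key : deltaH1 r ^ 2 + deltaH2 r =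
      (((r + 1) * Real.log (r + 1) - 2 * r) ^ 2 + r ^ 2 * (r - 1)) /
        (r ^ 4 * (r + 1) ^ 2) := by
    unfold deltaH1 deltaH2
    field_simp
    ring
  rw [key]
  have hr1 : (0:ℝ) < r - 1 := by linarith
  positivity

lemma strictConvexOn_deltaF : StrictConvexOn ℝ (Set.Ici 1) deltaF := by
  apply strictConvexOn_of_deriv2_pos (convex_Ici 1)
  · apply ContinuousOn.rpow
    · exact (continuous_id.add continuous_const).continuousOn
    · apply ContinuousOn.div
      · exact (continuous_id.sub continuous_const).continuousOn
      · exact continuous_id.continuousOn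
      · intro x hx; simp only [Set.mem_Ici] at hx; intro h; simp [h] at hx; linarith
    · intro x hx
      simp only [Set.mem_Ici] at hx
      exact Or.inl (by intro h; nlinarith [h])
  · intro x hx
    rw [interior_Ici] at hx
    simp only [Set.mem_Ioi] at hx
    have hd2 : HasDerivAt (deriv deltaF)
        (Real.exp (deltaH x) * (deltaH1 x ^ 2 + deltaH2 x)) x := by
      have h : HasDerivAt (fun y => Real.exp (deltaH y) * deltaH1 y)
          (Real.exp (deltaH x) * deltaH1 x * deltaH1 x +
            Real.exp (deltaH x) * deltaH2 x) x :=
        ((hasDerivAt_deltaH hx).exp).mul (hasDerivAt_deltaH1 hx)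
      have h' : HasDerivAt (fun y => Real.exp (deltaH y) * deltaH1 y)
          (Real.exp (deltaH x) * (deltaH1 x ^ 2 + deltaH2 x)) x := by
        convert h using 1; ring
      apply h'.congr_of_eventuallyEq
      filter_upwards [eventually_gt_nhds hx] with y hy
      exact (hasDerivAt_deltaF hy).deriv
    have : deriv^[2] deltaF x = Real.exp (deltaH x) * (deltaH1 x ^ 2 + deltaH2 x) := by
      simp only [Function.iterate_succ, Function.iterate_zero, Function.comp_apply, id_eq]
      exact hd2.deriv
    rw [this]
    exact mul_pos (Real.exp_pos _) (deltaH1sq_add_deltaH2_pos hx)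

lemma one_lt_deltaF {r : ℝ} (hr : 1 < r) : 1 < deltaF r := by
  rw [deltaF, Real.one_lt_rpow_iff_of_pos (by linarith)]
  left
  constructor
  · linarith
  · apply div_pos <;> linarith

/-- The threshold function `δ(r) = (r-1)/((r+1)^((r-1)/r) - 1) - 1` is strictly
decreasing on `(1, ∞)`. -/
theorem delta_strictAntiOn :
    StrictAntiOn (fun r : ℝ => (r - 1) / ((r + 1) ^ ((r - 1) / r) - 1) - 1)
      (Set.Ioi 1) := by
  intro a ha b hb hab
  simp only [Set.mem_Ioi] at ha hb
  have hF1 : deltaF 1 = 1 := by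
    rw [deltaF]; norm_num
  have hsec := strictConvexOn_deltaF.secant_strict_mono (a := 1) (x := a) (y := b)
    Set.self_mem_Ici (le_of_lt ha) (le_of_lt hb) (ne_of_gt ha) (ne_of_gt hb) hab
  rw [hF1] at hsec
  have hFa : 1 < deltaF a := one_lt_deltaF ha
  have hFb : 1 < deltaF b := one_lt_deltaF hb
  have goal : (b - 1) / (deltaF b - 1) < (a - 1) / (deltaF a - 1) := by
    rw [div_lt_div_iff₀ (by linarith) (by linarith)]
    rw [div_lt_div_iff₀ (by linarith) (by linarith)] at hsec
    nlinarith [hsec]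
  simp only
  unfold deltaF at goal
  linarith [goal]
end

section
/- For fixed r ≥ 1, R(t,r) = ((2r+t)/(2r²))·log((2r+t)/t) − 1/r is strictly decreasing in t on [1, ∞) and lim_{t→∞} R(t,r) = 0; moreover R(2,1) = 2·log 2 − 1. -/
open Real Filter

/-- For fixed `r ≥ 1`, `R(t,r) = ((2r+t)/(2r²))·log((2r+t)/t) − 1/r` is strictly
decreasing in `t` on `[1, ∞)` with limit `0` as `t → ∞`; moreover
`R(2,1) = 2 log 2 − 1`. -/
theorem R_properties (r : ℝ) (hr : 1 ≤ r) :
    let R : ℝ → ℝ → ℝ := fun t r => (2 * r + t) / (2 * r ^ 2) * Real.log ((2 * r + t) / t) - 1 / r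
    StrictAntiOn (fun t => R t r) (Set.Ici 1) ∧
      Tendsto (fun t => R t r) atTop (nhds 0) ∧
      R 2 1 = 2 * Real.log 2 - 1 := by
  intro R
  have hr0 : (0:ℝ) < r := lt_of_lt_of_le one_pos hr
  have hr2 : (0:ℝ) < 2 * r ^ 2 := by positivity
  refine ⟨?_, ?_, ?_⟩
  · -- strict anti
    have key : ∀ t : ℝ, 0 < t →
        HasDerivAt (fun t => R t r)
          (1 / (2 * r ^ 2) * Real.log ((2 * r + t) / t) - 1 / (r * t)) t := by
      intro t ht
      have h2rt : 0 < 2 * r + t := by positivity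
      have hv : HasDerivAt (fun t : ℝ => Real.log ((2 * r + t) / t))
          (1 / (2 * r + t) - 1 / t) t := by
        have h1 : HasDerivAt (fun t : ℝ => Real.log (2 * r + t)) (1 / (2 * r + t)) t := by
          have := (Real.hasDerivAt_log (ne_of_gt h2rt)).comp t
            ((hasDerivAt_const t (2*r)).add (hasDerivAt_id t))
          simpa [one_div, Function.comp_def] using this
        have h2 : HasDerivAt Real.log (1 / t) t := by
          simpa [one_div] using Real.hasDerivAt_log (ne_of_gt ht)
        have h3 := h1.sub h2
        refine h3.congr_of_eventuallyEq ?_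
        filter_upwards [eventually_gt_nhds ht] with x hx
        rw [Real.log_div (by positivity) (ne_of_gt hx)]; rfl
      have hu : HasDerivAt (fun t : ℝ => (2 * r + t) / (2 * r ^ 2)) (1 / (2 * r ^ 2)) t := by
        have := ((hasDerivAt_const t (2*r)).add (hasDerivAt_id t)).div_const (2 * r ^ 2)
        simpa using this
      have := hu.mul hv
      have heq : (1 / (2 * r ^ 2)) * Real.log ((2 * r + t) / t)
          + (2 * r + t) / (2 * r ^ 2) * (1 / (2 * r + t) - 1 / t)
          = 1 / (2 * r ^ 2) * Real.log ((2 * r + t) / t) - 1 / (r * t) := by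
        field_simp
        ring
      have := (this.sub_const (1 / r))
      rw [heq] at this
      exact this
    refine strictAntiOn_of_deriv_neg (convex_Ici 1) ?_ ?_
    · intro t ht
      have ht0 : (0:ℝ) < t := lt_of_lt_of_le one_pos ht
      exact ((key t ht0).continuousAt).continuousWithinAt
    · intro t ht
      rw [interior_Ici] at ht
      have ht0 : (0:ℝ) < t := lt_trans one_pos ht
      rw [(key t ht0).deriv]
      have hlt : Real.log ((2 * r + t) / t) < 2 * r / t := by
        have hx : (0:ℝ) < (2 * r + t) / t := by positivity
        have hne : (2 * r + t) / t ≠ 1 := by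
          intro h
          have := (div_eq_one_iff_eq (ne_of_gt ht0)).mp h
          linarith
        have := Real.log_lt_sub_one_of_pos hx hne
        have : Real.log ((2 * r + t) / t) < (2 * r + t) / t - 1 := this
        have heq : (2 * r + t) / t - 1 = 2 * r / t := by field_simp; ring
        linarith [heq ▸ this]
      have h1 : 1 / (2 * r ^ 2) * Real.log ((2 * r + t) / t)
          < 1 / (2 * r ^ 2) * (2 * r / t) := by
        apply mul_lt_mul_of_pos_left hlt
        positivity
      have heq2 : 1 / (2 * r ^ 2) * (2 * r / t) = 1 / (r * t) := by
        field_simp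
      linarith [heq2 ▸ h1]
  · -- limit
    have h1 : Tendsto (fun t : ℝ => t * Real.log (1 + 2 * r / t)) atTop (nhds (2 * r)) :=
      Real.tendsto_mul_log_one_add_div_atTop (2 * r)
    have h2 : Tendsto (fun t : ℝ => Real.log (1 + 2 * r / t)) atTop (nhds 0) := by
      have : Tendsto (fun t : ℝ => 1 + 2 * r / t) atTop (nhds 1) := by
        simpa using tendsto_const_nhds.add ((tendsto_const_nhds (x := 2*r)).div_atTop tendsto_id)
      have := (Real.continuousAt_log one_ne_zero).tendsto.comp this
      simpa [Function.comp_def] using this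
    have hmain : Tendsto (fun t : ℝ =>
        (1 / r) * Real.log (1 + 2 * r / t) + (1 / (2 * r ^ 2)) * (t * Real.log (1 + 2 * r / t)) - 1 / r)
        atTop (nhds 0) := by
      have := ((h2.const_mul (1 / r)).add (h1.const_mul (1 / (2 * r ^ 2)))).sub_const (1 / r)
      have heq : (1:ℝ) / r * 0 + 1 / (2 * r ^ 2) * (2 * r) - 1 / r = 0 := by
        field_simp; ring
      rwa [heq] at this
    refine hmain.congr' ?_
    filter_upwards [eventually_gt_atTop 0] with t ht
    have h3 : (2 * r + t) / t = 1 + 2 * r / t := by field_simp; ring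
    simp only [R, h3]
    field_simp
  · simp only [R]
    norm_num
end
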